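/- arXiv:1603.04280 — 7 statements merged into one kernel-verified Lean document; each statement's English description precedes it below -/
import Mathlib

section
/- Let G be a simple graph on n vertices with maximum degree Δ and let S be the skew-adjacency matrix of an orientation of G. The skew energy of the orientation equals n·√Δ if and only if SᵀS = Δ·Iₙ. -/
open Matrix BigOperators

/-- The skew energy of a real matrix `S`: the sum of its singular values, i.e. the
square roots of the eigenvalues of `Sᵀ * S` (which equals `Sᴴ * S` over `ℝ`). -/
noncomputable def skewEnergy {α : Type*} [Fintype α] [DecidableEq α]
    (S : Matrix α α ℝ) : ℝ :=
  ∑ i, Real.sqrt ((Matrix.isHermitian_conjTranspose_mul_self S).eigenvalues i)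

/-- `S` is the skew-adjacency matrix of some orientation of the simple graph `G`:
`S` is skew-symmetric with entries in `{0, ±1}` and `|S i j| = 1` iff `ij` is an edge. -/
def IsSkewAdj {α : Type*} (G : SimpleGraph α) (S : Matrix α α ℝ) : Prop :=
  Sᵀ = -S ∧ ∀ i j, (G.Adj i j → (S i j = 1 ∨ S i j = -1)) ∧ (¬ G.Adj i j → S i j = 0)

theorem skewEnergy_eq_iff {n : ℕ} (G : SimpleGraph (Fin n))
    [DecidableRel G.Adj] (S : Matrix (Fin n) (Fin n) ℝ) (hS : IsSkewAdj G S) :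
    skewEnergy S = n * Real.sqrt G.maxDegree ↔
      Sᵀ * S = (G.maxDegree : ℝ) • 1 := by
  classical
  set Δ : ℝ := (G.maxDegree : ℝ) with hΔdef
  have hΔ0 : 0 ≤ Δ := Nat.cast_nonneg _
  have hA := Matrix.isHermitian_conjTranspose_mul_self S
  set lam : Fin n → ℝ := hA.eigenvalues with hlam
  have hnn : ∀ i, 0 ≤ lam i := fun i =>
    Matrix.eigenvalues_conjTranspose_mul_self_nonneg S i
  have hct : Sᴴ = Sᵀ := Matrix.conjTranspose_eq_transpose_of_trivial S
  -- trace = sum of eigenvalues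
  have hU : star (hA.eigenvectorUnitary : Matrix (Fin n) (Fin n) ℝ) *
      (hA.eigenvectorUnitary : Matrix (Fin n) (Fin n) ℝ) = 1 :=
    Matrix.mem_unitaryGroup_iff'.mp (hA.eigenvectorUnitary).2
  have htraceeig : (Sᴴ * S).trace = ∑ i, lam i := by
    calc (Sᴴ * S).trace
        = ((hA.eigenvectorUnitary : Matrix (Fin n) (Fin n) ℝ) *
            Matrix.diagonal (RCLike.ofReal ∘ hA.eigenvalues) *
            star (hA.eigenvectorUnitary : Matrix (Fin n) (Fin n) ℝ)).trace := by
          exact congrArg Matrix.trace hA.spectral_theorem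
      _ = (star (hA.eigenvectorUnitary : Matrix (Fin n) (Fin n) ℝ) *
            (hA.eigenvectorUnitary : Matrix (Fin n) (Fin n) ℝ) *
            Matrix.diagonal (RCLike.ofReal ∘ hA.eigenvalues)).trace := by
          rw [Matrix.trace_mul_cycle]
      _ = ∑ i, lam i := by rw [hU, one_mul, Matrix.trace_diagonal]; simp [hlam]
  -- diagonal entries are degrees
  have hdiag : ∀ i, (Sᴴ * S) i i = (G.degree i : ℝ) := by
    intro i
    have h1 : (Sᴴ * S) i i = ∑ j, S j i * S j i := by
      simp [Matrix.mul_apply, Matrix.conjTranspose_apply]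
    rw [h1]
    have h2 : ∀ j ∈ Finset.univ, S j i * S j i
        = if G.Adj j i then (1 : ℝ) else 0 := by
      intro j _
      by_cases h : G.Adj j i
      · rcases (hS.2 j i).1 h with h' | h' <;> simp [h', h]
      · simp [(hS.2 j i).2 h, h]
    rw [Finset.sum_congr rfl h2, Finset.sum_boole]
    have h3 : Finset.univ.filter (fun j => G.Adj j i) = G.neighborFinset i := by
      ext j; simp [SimpleGraph.adj_comm]
    rw [h3, SimpleGraph.card_neighborFinset_eq_degree]
  have htr : (Sᴴ * S).trace ≤ n * Δ := by
    have : (Sᴴ * S).trace = ∑ i, ((G.degree i : ℝ)) := by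
      simp only [Matrix.trace, Matrix.diag]
      exact Finset.sum_congr rfl fun i _ => hdiag i
    rw [this]
    calc ∑ i : Fin n, ((G.degree i : ℝ)) ≤ ∑ _i : Fin n, Δ := by
          apply Finset.sum_le_sum
          intro i _
          simp only [hΔdef]
          exact_mod_cast G.degree_le_maxDegree i
      _ = n * Δ := by simp [mul_comm]
  have hsumlam : ∑ i, lam i ≤ n * Δ := htraceeig ▸ htr
  constructor
  · -- forward
    intro hE
    have hE' : ∑ i, Real.sqrt (lam i) = n * Real.sqrt Δ := hE
    have hexp : ∀ i, (Real.sqrt (lam i) - Real.sqrt Δ) ^ 2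
        = lam i - 2 * Real.sqrt Δ * Real.sqrt (lam i) + Δ := by
      intro i
      have h1 : Real.sqrt (lam i) ^ 2 = lam i := Real.sq_sqrt (hnn i)
      have h2 : Real.sqrt Δ ^ 2 = Δ := Real.sq_sqrt hΔ0
      nlinarith [h1, h2]
    have hsumsq : ∑ i, (Real.sqrt (lam i) - Real.sqrt Δ) ^ 2
        = (∑ i, lam i) - 2 * Real.sqrt Δ * (∑ i, Real.sqrt (lam i)) + n * Δ := by
      simp_rw [hexp]
      rw [Finset.sum_add_distrib, Finset.sum_sub_distrib, ← Finset.mul_sum,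
        Finset.sum_const, Finset.card_univ, Fintype.card_fin, nsmul_eq_mul]
    have hle : ∑ i, (Real.sqrt (lam i) - Real.sqrt Δ) ^ 2 ≤ 0 := by
      rw [hsumsq, hE']
      have h2 : Real.sqrt Δ ^ 2 = Δ := Real.sq_sqrt hΔ0
      nlinarith [hsumlam, h2]
    have hzero : ∑ i, (Real.sqrt (lam i) - Real.sqrt Δ) ^ 2 = 0 :=
      le_antisymm hle (Finset.sum_nonneg fun i _ => sq_nonneg _)
    have hall : ∀ i, lam i = Δ := by
      intro i
      have h0 : (Real.sqrt (lam i) - Real.sqrt Δ) ^ 2 = 0 :=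
        (Finset.sum_eq_zero_iff_of_nonneg (fun i _ => sq_nonneg _)).mp hzero i
          (Finset.mem_univ i)
      have h1 : Real.sqrt (lam i) = Real.sqrt Δ := by
        have := pow_eq_zero_iff (n := 2) (by norm_num) |>.mp h0
        linarith [this]
      calc lam i = Real.sqrt (lam i) ^ 2 := (Real.sq_sqrt (hnn i)).symm
        _ = Real.sqrt Δ ^ 2 := by rw [h1]
        _ = Δ := Real.sq_sqrt hΔ0
    -- now use spectral theorem
    have hfun : (RCLike.ofReal ∘ hA.eigenvalues : Fin n → ℝ) = fun _ => Δ :=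
      funext fun i => by exact hall i
    have hDiag : Matrix.diagonal (RCLike.ofReal ∘ hA.eigenvalues)
        = (Δ • 1 : Matrix (Fin n) (Fin n) ℝ) := by
      rw [hfun, ← Matrix.smul_one_eq_diagonal]
    have := hA.spectral_theorem
    rw [hDiag] at this
    rw [← hct, this]
    rw [Unitary.conjStarAlgAut_apply, Matrix.mul_smul, Matrix.smul_mul, mul_one,
      (Matrix.mem_unitaryGroup_iff).mp (hA.eigenvectorUnitary).2]
  · -- reverse
    intro hM
    have hM' : Sᴴ * S = Δ • (1 : Matrix (Fin n) (Fin n) ℝ) := by rw [hct]; exact hM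
    have hall : ∀ i, lam i = Δ := by
      intro i
      have h1 := hA.mulVec_eigenvectorBasis i
      have h1' : lam i • ⇑(hA.eigenvectorBasis i) = Δ • ⇑(hA.eigenvectorBasis i) :=
        h1.symm.trans ((congrArg (fun M => M *ᵥ ⇑(hA.eigenvectorBasis i)) hM').trans
          (by rw [Matrix.smul_mulVec, Matrix.one_mulVec]))
      have hne : ⇑(hA.eigenvectorBasis i) ≠ 0 := by
        intro h
        exact hA.eigenvectorBasis.orthonormal.ne_zero i (by ext j; exact congrFun h j)
      have h3 : (lam i - Δ) • ⇑(hA.eigenvectorBasis i) = 0 := by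
        rw [sub_smul, h1', sub_self]
      rcases smul_eq_zero.mp h3 with h | h
      · linarith [sub_eq_zero.mp h]
      · exact absurd h hne
    show ∑ i, Real.sqrt (lam i) = n * Real.sqrt Δ
    simp [hall, mul_comm]
end

section
/- Let S be the skew-adjacency matrix of an oriented graph G^σ on n vertices, and suppose SᵀS = k·Iₙ for some k. Then for any two distinct vertices u and v of the underlying graph G, the number of common neighbors |N(u) ∩ N(v)| is even. -/
open Matrix BigOperators

theorem even_card_common_neighbors {n : ℕ} (G : SimpleGraph (Fin n))
    [DecidableRel G.Adj] (S : Matrix (Fin n) (Fin n) ℝ) (k : ℝ)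
    (hS : IsSkewAdj G S) (h : Sᵀ * S = k • 1) :
    ∀ u v : Fin n, u ≠ v →
      Even (G.neighborFinset u ∩ G.neighborFinset v).card := by
  intro u v huv
  obtain ⟨-, hval⟩ := hS
  set T := G.neighborFinset u ∩ G.neighborFinset v with hT
  -- the sum of S w u * S w v over T is (Sᵀ S) u v = 0
  have hsum : ∑ w ∈ T, S w u * S w v = 0 := by
    have h0 : (Sᵀ * S) u v = 0 := by
      rw [h]; simp [Matrix.one_apply_ne huv]
    rw [Matrix.mul_apply] at h0
    rw [← h0]
    apply Finset.sum_subset (Finset.subset_univ T)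
    intro w _ hw
    simp only [hT, Finset.mem_inter, SimpleGraph.mem_neighborFinset] at hw
    push_neg at hw
    by_cases hwu : G.Adj u w
    · have := (hval w v).2 (fun hadj => hw hwu hadj.symm)
      simp [this]
    · have : S w u = 0 := (hval w u).2 (fun hadj => hwu hadj.symm)
      simp [transpose_apply, this]
  have hpm : ∀ w ∈ T, S w u * S w v = 1 ∨ S w u * S w v = -1 := by
    intro w hw
    simp only [hT, Finset.mem_inter, SimpleGraph.mem_neighborFinset] at hw
    rcases (hval w u).1 hw.1.symm with h1 | h1 <;>
      rcases (hval w v).1 hw.2.symm with h2 | h2 <;> simp [h1, h2]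
  classical
  set P := T.filter (fun w => S w u * S w v = 1) with hP
  set N := T.filter (fun w => S w u * S w v = -1) with hN
  have hNeq : T.filter (fun w => ¬ S w u * S w v = 1) = N := by
    apply Finset.filter_congr
    intro w hw
    rcases hpm w hw with h1 | h1 <;> simp [h1] <;> norm_num
  have hsplit : T.card = P.card + N.card := by
    rw [hP, ← hNeq, Finset.card_filter_add_card_filter_not]
  have hsum2 : ∑ w ∈ T, S w u * S w v = (P.card : ℝ) - (N.card : ℝ) := by
    rw [← Finset.sum_filter_add_sum_filter_not T (fun w => S w u * S w v = 1)]
    have e1 : ∑ w ∈ T.filter (fun w => S w u * S w v = 1), S w u * S w v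
        = (P.card : ℝ) := by
      rw [Finset.sum_congr rfl (fun w hw => (Finset.mem_filter.mp hw).2)]
      simp [hP]
    have e2 : ∑ w ∈ T.filter (fun w => ¬ S w u * S w v = 1), S w u * S w v
        = -(N.card : ℝ) := by
      rw [hNeq, Finset.sum_congr rfl (fun w hw => (Finset.mem_filter.mp hw).2)]
      simp [hN]
    rw [e1, e2]; ring
  have hPN : P.card = N.card := by
    have := hsum2.symm.trans hsum
    have : (P.card : ℝ) = (N.card : ℝ) := by linarith
    exact_mod_cast this
  exact ⟨P.card, by omega⟩
end

section
/- Let G^σ be a 5-regular oriented graph on n vertices whose skew-adjacency matrix S satisfies SᵀS = 5·Iₙ. Then for any two distinct vertices u and v, |N(u) ∩ N(v)| ∈ {0, 2, 4}. -/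
open Matrix BigOperators

theorem card_common_neighbors_mem {n : ℕ} (G : SimpleGraph (Fin n))
    [DecidableRel G.Adj] (hreg : G.IsRegularOfDegree 5)
    (S : Matrix (Fin n) (Fin n) ℝ) (hS : IsSkewAdj G S)
    (h : Sᵀ * S = (5 : ℝ) • 1) :
    ∀ u v : Fin n, u ≠ v →
      (G.neighborFinset u ∩ G.neighborFinset v).card ∈ ({0, 2, 4} : Set ℕ) := by
  obtain ⟨hskew, hent⟩ := hS
  intro u v huv
  set T := G.neighborFinset u ∩ G.neighborFinset v with hT
  have hsum : ∑ k, S k u * S k v = 0 := by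
    have h' := congrFun (congrFun h u) v
    simpa [Matrix.mul_apply, Matrix.transpose_apply, Matrix.one_apply, huv] using h'
  have hz : ∀ k ∈ Finset.univ, k ∉ T → S k u * S k v = 0 := by
    intro k _ hk
    simp only [hT, Finset.mem_inter, SimpleGraph.mem_neighborFinset, not_and_or] at hk
    rcases hk with hk | hk
    · rw [(hent k u).2 (fun hadj => hk hadj.symm), zero_mul]
    · rw [(hent k v).2 (fun hadj => hk hadj.symm), mul_zero]
  have hsumT : ∑ k ∈ T, S k u * S k v = 0 :=
    (Finset.sum_subset (Finset.subset_univ T) hz).trans hsum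
  have hpm : ∀ k ∈ T, S k u * S k v = 1 ∨ S k u * S k v = -1 := by
    intro k hk
    simp only [hT, Finset.mem_inter, SimpleGraph.mem_neighborFinset] at hk
    rcases (hent k u).1 hk.1.symm with h1 | h1 <;>
      rcases (hent k v).1 hk.2.symm with h2 | h2 <;> simp [h1, h2]
  classical
  set P := T.filter (fun k => S k u * S k v = 1) with hP
  set M := T.filter (fun k => S k u * S k v = -1) with hM
  have hunion : T = P ∪ M := by
    ext k
    simp only [hP, hM, Finset.mem_union, Finset.mem_filter]
    constructor
    · intro hk; rcases hpm k hk with h1 | h1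
      · exact Or.inl ⟨hk, h1⟩
      · exact Or.inr ⟨hk, h1⟩
    · rintro (⟨hk, _⟩ | ⟨hk, _⟩) <;> exact hk
  have hdisj : Disjoint P M := by
    rw [Finset.disjoint_left]
    intro k hkP hkM
    simp only [hP, hM, Finset.mem_filter] at hkP hkM
    rw [hkP.2] at hkM
    norm_num at hkM
  have hsplit : ((P.card : ℝ)) - (M.card : ℝ) = 0 := by
    have : ∑ k ∈ P, S k u * S k v + ∑ k ∈ M, S k u * S k v = 0 := by
      rw [← Finset.sum_union hdisj, ← hunion]; exact hsumT
    have hPs : ∑ k ∈ P, S k u * S k v = (P.card : ℝ) := by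
      rw [Finset.sum_congr rfl (fun k hk => (Finset.mem_filter.mp hk).2)]
      simp
      rfl
    have hMs : ∑ k ∈ M, S k u * S k v = -(M.card : ℝ) := by
      rw [Finset.sum_congr rfl (fun k hk => (Finset.mem_filter.mp hk).2)]
      simp
      rfl
    rw [hPs, hMs] at this
    linarith
  have hcardeq : P.card = M.card := by
    have := sub_eq_zero.mp hsplit
    exact_mod_cast this
  have hcardT : T.card = 2 * P.card := by
    rw [hunion, Finset.card_union_of_disjoint hdisj, hcardeq]
    omega
  have hle : T.card ≤ 5 := by
    have hsub : T ⊆ G.neighborFinset u := Finset.inter_subset_left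
    have := Finset.card_le_card hsub
    rwa [SimpleGraph.card_neighborFinset_eq_degree, hreg u] at this
  simp only [Set.mem_insert_iff, Set.mem_singleton_iff]
  omega
end

section
/- The complete graph K₆ admits no orientation σ with skew-adjacency matrix S satisfying SᵀS = 5·I₆; equivalently, no orientation of K₆ attains skew energy 6√5. -/
open Matrix BigOperators

/-- Key combinatorial lemma: no skew-conference matrix of order 6 (would give a
Hadamard matrix of order 6, impossible by the standard counting argument mod 4). -/
lemma K6_key (S : Matrix (Fin 6) (Fin 6) ℝ)
    (hS : IsSkewAdj (⊤ : SimpleGraph (Fin 6)) S)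
    (h5 : Sᵀ * S = (5 : ℝ) • 1) : False := by
  obtain ⟨hskew, hent⟩ := hS
  have hdiag : ∀ i, S i i = 0 := fun i => (hent i i).2 (by simp)
  have hoff : ∀ i j : Fin 6, i ≠ j → S i j = 1 ∨ S i j = -1 := fun i j h =>
    (hent i j).1 (by simpa using h)
  set H : Matrix (Fin 6) (Fin 6) ℝ := 1 + S with hHdef
  have hHmul : Hᵀ * H = (6 : ℝ) • 1 := by
    have e : Hᵀ * H = 1 + S + Sᵀ + Sᵀ * S := by
      rw [hHdef, transpose_add, transpose_one, add_mul, mul_add, mul_add,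
        Matrix.one_mul, Matrix.mul_one]
      simp only [Matrix.one_mul, Matrix.mul_one, one_mul, mul_one]
      abel
    rw [e, h5, hskew]
    module
  have orth : ∀ i j : Fin 6, i ≠ j → ∑ k, H k i * H k j = 0 := by
    intro i j hij
    have := congrFun (congrFun hHmul i) j
    simpa [Matrix.mul_apply, Matrix.one_apply, hij, mul_comm] using this
  have Hent : ∀ k i : Fin 6, H k i = 1 ∨ H k i = -1 := by
    intro k i
    by_cases h : k = i
    · subst h; left; simp [hHdef, Matrix.one_apply, hdiag]
    · have := hoff k i h
      simpa [hHdef, Matrix.one_apply, h] using this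
  set a : Fin 6 → ℝ := fun k => (1 + H k 0 * H k 1) * (1 + H k 0 * H k 2) with hadef
  have hal : ∀ k, a k = 1 + H k 0 * H k 1 + H k 0 * H k 2 + H k 1 * H k 2 := by
    intro k
    rcases Hent k 0 with h | h <;> rw [hadef] <;> simp only [] <;> rw [h] <;> ring
  have hsum : ∑ k, a k = 6 := by
    calc ∑ k, a k
        = ∑ k, (1 + H k 0 * H k 1 + H k 0 * H k 2 + H k 1 * H k 2) :=
          Finset.sum_congr rfl fun k _ => hal k
      _ = (∑ _k : Fin 6, (1:ℝ)) + (∑ k, H k 0 * H k 1) + (∑ k, H k 0 * H k 2)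
            + (∑ k, H k 1 * H k 2) := by
          rw [Finset.sum_add_distrib, Finset.sum_add_distrib, Finset.sum_add_distrib]
      _ = 6 := by
          rw [orth 0 1 (by decide), orth 0 2 (by decide), orth 1 2 (by decide)]
          norm_num
  have ha04 : ∀ k, a k = 0 ∨ a k = 4 := by
    intro k
    rcases Hent k 0 with h0 | h0 <;> rcases Hent k 1 with h1 | h1 <;>
      rcases Hent k 2 with h2 | h2 <;>
      rw [hadef] <;> simp only [] <;> rw [h0, h1, h2] <;> norm_num
  set T : Finset (Fin 6) := Finset.univ.filter (fun k => a k = 4) with hT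
  have hsum2 : ∑ k, a k = 4 * (T.card : ℝ) := by
    rw [← Finset.sum_filter_add_sum_filter_not Finset.univ (fun k => a k = 4)]
    have h1 : ∑ k ∈ Finset.univ.filter (fun k => a k = 4), a k = 4 * (T.card : ℝ) := by
      rw [Finset.sum_congr rfl (fun k hk => (Finset.mem_filter.mp hk).2)]
      rw [Finset.sum_const, nsmul_eq_mul, ← hT, mul_comm]
    have h2 : ∑ k ∈ Finset.univ.filter (fun k => ¬ a k = 4), a k = 0 :=
      Finset.sum_eq_zero fun k hk =>
        (ha04 k).resolve_right (Finset.mem_filter.mp hk).2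
    rw [h1, h2, add_zero]
  rw [hsum] at hsum2
  have : (4 * T.card : ℕ) = 6 := by exact_mod_cast hsum2.symm
  omega

theorem K6_no_optimum_orientation :
    ¬ ∃ S : Matrix (Fin 6) (Fin 6) ℝ,
        IsSkewAdj (⊤ : SimpleGraph (Fin 6)) S ∧
        (Sᵀ * S = (5 : ℝ) • 1 ∨ skewEnergy S = 6 * Real.sqrt 5) := by
  rintro ⟨S, hS, h | hE⟩
  · exact K6_key S hS h
  · set hH := Matrix.isHermitian_conjTranspose_mul_self S with hHdef
    have hT : Sᴴ = Sᵀ := Matrix.conjTranspose_eq_transpose_of_trivial S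
    have hnn : ∀ i, 0 ≤ hH.eigenvalues i := fun i =>
      Matrix.eigenvalues_conjTranspose_mul_self_nonneg S i
    -- trace of Sᴴ * S is 30
    have hdiag : ∀ i, S i i = 0 := fun i => (hS.2 i i).2 (by simp)
    have hoff : ∀ i j : Fin 6, i ≠ j → S i j = 1 ∨ S i j = -1 := fun i j h =>
      (hS.2 i j).1 (by simpa using h)
    have hcol : ∀ i : Fin 6, ∑ k, S k i * S k i = 5 := by
      intro i
      rw [← Finset.add_sum_erase _ _ (Finset.mem_univ i), hdiag i, mul_zero, zero_add]
      have : ∀ k ∈ Finset.univ.erase i, S k i * S k i = 1 := by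
        intro k hk
        rcases hoff k i (Finset.mem_erase.mp hk).1 with h | h <;> rw [h] <;> norm_num
      rw [Finset.sum_congr rfl this, Finset.sum_const,
        Finset.card_erase_of_mem (Finset.mem_univ i)]
      simp
    have htrace : (Sᴴ * S).trace = 30 := by
      rw [Matrix.trace]
      have : ∀ i : Fin 6, (Sᴴ * S).diag i = 5 := by
        intro i
        simp only [Matrix.diag_apply, Matrix.mul_apply, Matrix.conjTranspose_apply,
          star_trivial]
        exact hcol i
      rw [Finset.sum_congr rfl fun i _ => this i]
      norm_num
    have htr : ∑ i, hH.eigenvalues i = 30 := by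
      have hst := hH.spectral_theorem
      have hU : (hH.eigenvectorUnitary : Matrix (Fin 6) (Fin 6) ℝ) *
          star (hH.eigenvectorUnitary : Matrix (Fin 6) (Fin 6) ℝ) = 1 :=
        Matrix.mem_unitaryGroup_iff.mp (hH.eigenvectorUnitary).2
      have hU' : star (hH.eigenvectorUnitary : Matrix (Fin 6) (Fin 6) ℝ) *
          (hH.eigenvectorUnitary : Matrix (Fin 6) (Fin 6) ℝ) = 1 :=
        Matrix.mem_unitaryGroup_iff'.mp (hH.eigenvectorUnitary).2
      have : (Sᴴ * S).trace = ∑ i, hH.eigenvalues i := by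
        conv_lhs => rw [hst, Unitary.conjStarAlgAut_apply]
        rw [Matrix.trace_mul_cycle, hU', Matrix.one_mul, Matrix.trace_diagonal]
        simp [RCLike.ofReal_real_eq_id]
      rw [htrace] at this
      linarith
    have hE' : ∑ i, Real.sqrt (hH.eigenvalues i) = 6 * Real.sqrt 5 := hE
    have hvar : ∑ i, (Real.sqrt (hH.eigenvalues i) - Real.sqrt 5) ^ 2 = 0 := by
      have expand : ∀ i, (Real.sqrt (hH.eigenvalues i) - Real.sqrt 5) ^ 2
          = hH.eigenvalues i - 2 * Real.sqrt 5 * Real.sqrt (hH.eigenvalues i) + 5 := by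
        intro i
        have h1 : Real.sqrt (hH.eigenvalues i) ^ 2 = hH.eigenvalues i :=
          Real.sq_sqrt (hnn i)
        have h2 : Real.sqrt 5 ^ 2 = 5 := Real.sq_sqrt (by norm_num)
        calc (Real.sqrt (hH.eigenvalues i) - Real.sqrt 5) ^ 2
            = Real.sqrt (hH.eigenvalues i) ^ 2
              - 2 * Real.sqrt 5 * Real.sqrt (hH.eigenvalues i) + Real.sqrt 5 ^ 2 := by ring
          _ = _ := by rw [h1, h2]
      rw [Finset.sum_congr rfl fun i _ => expand i, Finset.sum_add_distrib,
        Finset.sum_sub_distrib, ← Finset.mul_sum, htr, hE']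
      have h5 : Real.sqrt 5 * Real.sqrt 5 = 5 := Real.mul_self_sqrt (by norm_num)
      have : ∑ _i : Fin 6, (5:ℝ) = 30 := by norm_num
      rw [this]
      nlinarith [h5]
    have heig : ∀ i, hH.eigenvalues i = 5 := by
      intro i
      have hterm : (Real.sqrt (hH.eigenvalues i) - Real.sqrt 5) ^ 2 = 0 :=
        (Finset.sum_eq_zero_iff_of_nonneg fun j _ => sq_nonneg _).mp hvar i
          (Finset.mem_univ i)
      have heq : Real.sqrt (hH.eigenvalues i) = Real.sqrt 5 := by
        have := pow_eq_zero_iff (n := 2) (by norm_num) |>.mp hterm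
        linarith [this]
      have h1 : Real.sqrt (hH.eigenvalues i) ^ 2 = hH.eigenvalues i :=
        Real.sq_sqrt (hnn i)
      have h2 : Real.sqrt 5 ^ 2 = 5 := Real.sq_sqrt (by norm_num)
      rw [← h1, heq, h2]
    have h5 : Sᴴ * S = (5 : ℝ) • 1 := by
      have hst := hH.spectral_theorem
      have hU : (hH.eigenvectorUnitary : Matrix (Fin 6) (Fin 6) ℝ) *
          star (hH.eigenvectorUnitary : Matrix (Fin 6) (Fin 6) ℝ) = 1 :=
        Matrix.mem_unitaryGroup_iff.mp (hH.eigenvectorUnitary).2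
      have hd : Matrix.diagonal (RCLike.ofReal ∘ hH.eigenvalues)
          = (5 : ℝ) • (1 : Matrix (Fin 6) (Fin 6) ℝ) := by
        rw [Matrix.smul_one_eq_diagonal]
        have he : (RCLike.ofReal ∘ hH.eigenvalues : Fin 6 → ℝ) = fun _ => (5:ℝ) := by
          funext i
          simp only [Function.comp_apply, RCLike.ofReal_real_eq_id, id]
          exact heig i
        rw [he]
      rw [hst, Unitary.conjStarAlgAut_apply, hd, Matrix.mul_smul, Matrix.smul_mul, Matrix.mul_one, hU]
    rw [hT] at h5
    exact K6_key S hS h5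
end

section
/- Let G^σ be an oriented k-regular graph on n vertices whose skew-adjacency matrix S satisfies SᵀS = k·Iₙ. Then the Cartesian product P₂ □ G admits an orientation whose skew-adjacency matrix T satisfies TᵀT = (k+1)·I_{2n}; hence P₂ □ G has maximum skew energy 2n√(k+1). -/
open Matrix BigOperators

lemma eigenvalues_smul_one {α : Type*} [Fintype α] [DecidableEq α]
    {A : Matrix α α ℝ} (hA : A.IsHermitian) (c : ℝ) (hc : A = c • 1) (i : α) :
    hA.eigenvalues i = c := by
  subst hc
  have h1 := hA.mulVec_eigenvectorBasis i
  have h2 : (c • (1 : Matrix α α ℝ)) *ᵥ ⇑(hA.eigenvectorBasis i)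
      = c • ⇑(hA.eigenvectorBasis i) := by
    simp [Matrix.smul_mulVec]
  rw [h2] at h1
  have hv : ⇑(hA.eigenvectorBasis i) ≠ 0 := by
    have := hA.eigenvectorBasis.orthonormal.1 i
    intro h0
    rw [show hA.eigenvectorBasis i = 0 from by ext x; exact congrFun h0 x] at this
    simp at this
  have h3 : (c - hA.eigenvalues i) • ⇑(hA.eigenvectorBasis i) = 0 := by
    rw [sub_smul, h1, sub_self]
  rcases smul_eq_zero.mp h3 with h | h
  · linarith [sub_eq_zero.mp h]
  · exact absurd h hv

theorem boxProd_pathGraph_optimum {n k : ℕ} (G : SimpleGraph (Fin n))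
    [DecidableRel G.Adj] (hreg : G.IsRegularOfDegree k)
    (S : Matrix (Fin n) (Fin n) ℝ) (hS : IsSkewAdj G S)
    (h : Sᵀ * S = (k : ℝ) • 1) :
    ∃ T : Matrix (Fin 2 × Fin n) (Fin 2 × Fin n) ℝ,
      IsSkewAdj ((SimpleGraph.pathGraph 2).boxProd G) T ∧
      Tᵀ * T = ((k : ℝ) + 1) • 1 ∧
      skewEnergy T = 2 * n * Real.sqrt (k + 1) := by
  obtain ⟨hskew, hent⟩ := hS
  let e : Fin 2 × Fin n ≃ Fin n ⊕ Fin n :=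
    (Equiv.prodCongr finTwoEquiv (Equiv.refl (Fin n))).trans (Equiv.boolProdEquivSum (Fin n))
  let B : Matrix (Fin n ⊕ Fin n) (Fin n ⊕ Fin n) ℝ :=
    Matrix.fromBlocks S 1 (-1) (-S)
  have hs2 : S * S = -((k : ℝ) • 1) := by
    have h2 := h
    rw [hskew, neg_mul, neg_eq_iff_eq_neg] at h2
    exact h2
  have hBt : Bᵀ = -B := by
    show (Matrix.fromBlocks S 1 (-1) (-S))ᵀ = -(Matrix.fromBlocks S 1 (-1) (-S))
    rw [Matrix.fromBlocks_transpose, Matrix.fromBlocks_neg]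
    simp [hskew]
  have htt : (B.submatrix e e)ᵀ * (B.submatrix e e) = ((k : ℝ) + 1) • 1 := by
    rw [Matrix.transpose_submatrix, Matrix.submatrix_mul_equiv]
    have key : Bᵀ * B = ((k : ℝ) + 1) • (1 : Matrix (Fin n ⊕ Fin n) (Fin n ⊕ Fin n) ℝ) := by
      show (Matrix.fromBlocks S 1 (-1) (-S))ᵀ * Matrix.fromBlocks S 1 (-1) (-S) = _
      rw [Matrix.fromBlocks_transpose, Matrix.fromBlocks_multiply, ← Matrix.fromBlocks_one,
        Matrix.fromBlocks_smul]
      congr 1 <;> simp [hskew, hs2, add_smul] <;> abel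
    rw [key]
    simp [Matrix.submatrix_smul, Matrix.submatrix_one_equiv]
  have E00 : ∀ i j, (B.submatrix e e) ((0 : Fin 2), i) ((0 : Fin 2), j) = S i j :=
    fun i j => rfl
  have E11 : ∀ i j, (B.submatrix e e) ((1 : Fin 2), i) ((1 : Fin 2), j) = -S i j :=
    fun i j => rfl
  have E01 : ∀ i j, (B.submatrix e e) ((0 : Fin 2), i) ((1 : Fin 2), j)
      = if i = j then 1 else 0 := by
    intro i j
    show (1 : Matrix (Fin n) (Fin n) ℝ) i j = _
    rw [Matrix.one_apply]
  have E10 : ∀ i j, (B.submatrix e e) ((1 : Fin 2), i) ((0 : Fin 2), j)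
      = if i = j then -1 else 0 := by
    intro i j
    show (-1 : Matrix (Fin n) (Fin n) ℝ) i j = _
    rw [Matrix.neg_apply, Matrix.one_apply]
    split <;> simp
  refine ⟨B.submatrix e e, ⟨?_, ?_⟩, htt, ?_⟩
  · rw [Matrix.transpose_submatrix, hBt]; rfl
  · rintro ⟨a, i⟩ ⟨b, j⟩
    have hadj : ((SimpleGraph.pathGraph 2).boxProd G).Adj (a, i) (b, j) ↔
        ((a ≠ b ∧ i = j) ∨ (a = b ∧ G.Adj i j)) := by
      rw [SimpleGraph.boxProd_adj]
      simp only [SimpleGraph.pathGraph_adj]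
      constructor
      · rintro (⟨hp, hij⟩ | ⟨hg, hab⟩)
        · exact Or.inl ⟨by omega, hij⟩
        · exact Or.inr ⟨hab, hg⟩
      · rintro (⟨hab, hij⟩ | ⟨hab, hg⟩)
        · exact Or.inl ⟨by omega, hij⟩
        · exact Or.inr ⟨hg, hab⟩
    rw [hadj]
    have ha : a = 0 ∨ a = 1 := by omega
    have hb : b = 0 ∨ b = 1 := by omega
    rcases ha with rfl | rfl <;> rcases hb with rfl | rfl
    · rw [E00]
      refine ⟨fun hyp => ?_, fun hyp => ?_⟩
      · rcases hyp with ⟨hab, _⟩ | ⟨_, hg⟩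
        · exact absurd rfl hab
        · exact (hent i j).1 hg
      · exact (hent i j).2 fun hg => hyp (Or.inr ⟨rfl, hg⟩)
    · rw [E01]
      refine ⟨fun hyp => ?_, fun hyp => ?_⟩
      · rcases hyp with ⟨_, hij⟩ | ⟨hab, _⟩
        · exact Or.inl (by simp [hij])
        · exact absurd hab (by decide)
      · have hij : i ≠ j := fun hij => hyp (Or.inl ⟨by decide, hij⟩)
        simp [hij]
    · rw [E10]
      refine ⟨fun hyp => ?_, fun hyp => ?_⟩
      · rcases hyp with ⟨_, hij⟩ | ⟨hab, _⟩
        · exact Or.inr (by simp [hij])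
        · exact absurd hab (by decide)
      · have hij : i ≠ j := fun hij => hyp (Or.inl ⟨by decide, hij⟩)
        simp [hij]
    · rw [E11]
      refine ⟨fun hyp => ?_, fun hyp => ?_⟩
      · rcases hyp with ⟨hab, _⟩ | ⟨_, hg⟩
        · exact absurd rfl hab
        · rcases (hent i j).1 hg with h1 | h1 <;> simp [h1]
      · have := (hent i j).2 fun hg => hyp (Or.inr ⟨rfl, hg⟩)
        simp [this]
  · unfold skewEnergy
    have heig := fun i => eigenvalues_smul_one
      (Matrix.isHermitian_conjTranspose_mul_self (B.submatrix e e)) ((k : ℝ) + 1) htt i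
    simp only [heig]
    rw [Finset.sum_const, Finset.card_univ]
    simp [Fintype.card_prod, nsmul_eq_mul]
end

section
/- Let G be a connected 5-regular graph containing K₄ as a subgraph such that every pair of distinct vertices has an even number of common neighbors, and suppose that for some vertex v₁ of the K₄, the other three K₄-vertices are all adjacent to both remaining neighbors v₅, v₆ of v₁. Then G is isomorphic to K₆. -/
open Matrix BigOperators

set_option maxHeartbeats 1000000 in
theorem case_222_gives_K6 {V : Type*} [Fintype V] [DecidableEq V]
    (G : SimpleGraph V) [DecidableRel G.Adj]
    (hconn : G.Connected) (hreg : G.IsRegularOfDegree 5)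
    (heven : ∀ u v : V, u ≠ v →
      Even (G.neighborFinset u ∩ G.neighborFinset v).card)
    (v₁ v₂ v₃ v₄ v₅ v₆ : V)
    (hK4 : G.Adj v₁ v₂ ∧ G.Adj v₁ v₃ ∧ G.Adj v₁ v₄ ∧
           G.Adj v₂ v₃ ∧ G.Adj v₂ v₄ ∧ G.Adj v₃ v₄)
    (hN : G.neighborFinset v₁ = {v₂, v₃, v₄, v₅, v₆})
    (h5 : G.Adj v₂ v₅ ∧ G.Adj v₃ v₅ ∧ G.Adj v₄ v₅)
    (h6 : G.Adj v₂ v₆ ∧ G.Adj v₃ v₆ ∧ G.Adj v₄ v₆) :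
    Nonempty (G ≃g (⊤ : SimpleGraph (Fin 6))) := by
  obtain ⟨a12, a13, a14, a23, a24, a34⟩ := hK4
  obtain ⟨a25, a35, a45⟩ := h5
  obtain ⟨a26, a36, a46⟩ := h6
  have a15 : G.Adj v₁ v₅ := by
    rw [← SimpleGraph.mem_neighborFinset, hN]; simp
  have a16 : G.Adj v₁ v₆ := by
    rw [← SimpleGraph.mem_neighborFinset, hN]; simp
  -- parity argument: v₅ ~ v₆
  have a56 : G.Adj v₅ v₆ := by
    by_contra hnot
    have hint : G.neighborFinset v₁ ∩ G.neighborFinset v₅ = {v₂, v₃, v₄} := by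
      ext x
      simp only [Finset.mem_inter, SimpleGraph.mem_neighborFinset, hN,
        Finset.mem_insert, Finset.mem_singleton]
      constructor
      · rintro ⟨(rfl|rfl|rfl|rfl|rfl), hx⟩
        · tauto
        · tauto
        · tauto
        · exact absurd hx (G.irrefl)
        · exact absurd hx hnot
      · rintro (rfl|rfl|rfl)
        · exact ⟨Or.inl rfl, a25.symm⟩
        · exact ⟨Or.inr (Or.inl rfl), a35.symm⟩
        · exact ⟨Or.inr (Or.inr (Or.inl rfl)), a45.symm⟩
    have he := heven v₁ v₅ a15.ne
    rw [hint] at he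
    have hc : ({v₂, v₃, v₄} : Finset V).card = 3 := by
      simp [Finset.card_insert_of_notMem, a23.ne, a24.ne, a34.ne]
    rw [hc] at he
    exact (by decide : ¬ Even 3) he
  -- all pairwise distinct
  have n12 := a12.ne; have n13 := a13.ne; have n14 := a14.ne
  have n15 := a15.ne; have n16 := a16.ne
  have n23 := a23.ne; have n24 := a24.ne; have n25 := a25.ne; have n26 := a26.ne
  have n34 := a34.ne; have n35 := a35.ne; have n36 := a36.ne
  have n45 := a45.ne; have n46 := a46.ne; have n56 := a56.ne
  -- neighborhoods
  have nbhd : ∀ (u a b c d e : V), ({a,b,c,d,e} : Finset V).card = 5 →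
      G.Adj u a → G.Adj u b → G.Adj u c → G.Adj u d → G.Adj u e →
      G.neighborFinset u = {a,b,c,d,e} := by
    intro u a b c d e hcard ha hb hc hd he
    refine (Finset.eq_of_subset_of_card_le ?_ ?_).symm
    · intro x hx
      simp only [Finset.mem_insert, Finset.mem_singleton] at hx
      rw [SimpleGraph.mem_neighborFinset]
      rcases hx with rfl|rfl|rfl|rfl|rfl <;> assumption
    · rw [hcard]; exact le_of_eq (hreg u)
  have hN2 : G.neighborFinset v₂ = {v₁, v₃, v₄, v₅, v₆} :=
    nbhd _ _ _ _ _ _ (by simp [Finset.card_insert_of_notMem, n13, n14, n15, n16, n34, n35, n36, n45, n46, n56])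
      a12.symm a23 a24 a25 a26
  have hN3 : G.neighborFinset v₃ = {v₁, v₂, v₄, v₅, v₆} :=
    nbhd _ _ _ _ _ _ (by simp [Finset.card_insert_of_notMem, n12, n14, n15, n16, n24, n25, n26, n45, n46, n56])
      a13.symm a23.symm a34 a35 a36
  have hN4 : G.neighborFinset v₄ = {v₁, v₂, v₃, v₅, v₆} :=
    nbhd _ _ _ _ _ _ (by simp [Finset.card_insert_of_notMem, n12, n13, n15, n16, n23, n25, n26, n35, n36, n56])
      a14.symm a24.symm a34.symm a45 a46
  have hN5 : G.neighborFinset v₅ = {v₁, v₂, v₃, v₄, v₆} :=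
    nbhd _ _ _ _ _ _ (by simp [Finset.card_insert_of_notMem, n12, n13, n14, n16, n23, n24, n26, n34, n36, n46])
      a15.symm a25.symm a35.symm a45.symm a56
  have hN6 : G.neighborFinset v₆ = {v₁, v₂, v₃, v₄, v₅} :=
    nbhd _ _ _ _ _ _ (by simp [Finset.card_insert_of_notMem, n12, n13, n14, n15, n23, n24, n25, n34, n35, n45])
      a16.symm a26.symm a36.symm a46.symm a56.symm
  -- closure under adjacency
  set S : Finset V := {v₁, v₂, v₃, v₄, v₅, v₆} with hSdef
  have hclos : ∀ a b : V, G.Adj a b → a ∈ S → b ∈ S := by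
    intro a b hab ha
    have hb := (SimpleGraph.mem_neighborFinset G a b).2 hab
    simp only [hSdef, Finset.mem_insert, Finset.mem_singleton] at ha ⊢
    rcases ha with rfl|rfl|rfl|rfl|rfl|rfl
    · rw [hN] at hb; simp only [Finset.mem_insert, Finset.mem_singleton] at hb; tauto
    · rw [hN2] at hb; simp only [Finset.mem_insert, Finset.mem_singleton] at hb; tauto
    · rw [hN3] at hb; simp only [Finset.mem_insert, Finset.mem_singleton] at hb; tauto
    · rw [hN4] at hb; simp only [Finset.mem_insert, Finset.mem_singleton] at hb; tauto
    · rw [hN5] at hb; simp only [Finset.mem_insert, Finset.mem_singleton] at hb; tauto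
    · rw [hN6] at hb; simp only [Finset.mem_insert, Finset.mem_singleton] at hb; tauto
  have hS : ∀ u : V, u ∈ S := by
    have key : ∀ (a u : V) (_ : G.Walk a u), a ∈ S → u ∈ S := by
      intro a u p
      induction p with
      | nil => exact id
      | cons h _ ih => exact fun hx => ih (hclos _ _ h hx)
    intro u
    obtain ⟨p⟩ := hconn.preconnected v₁ u
    exact key _ _ p (by simp [hSdef])
  -- all distinct pairs adjacent
  have hadj : ∀ u v : V, u ≠ v → G.Adj u v := by
    intro u v huv
    have hu := hS u; have hv := hS v
    simp only [hSdef, Finset.mem_insert, Finset.mem_singleton] at hu hv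
    have a21 := a12.symm; have a31 := a13.symm; have a41 := a14.symm
    have a51 := a15.symm; have a61 := a16.symm
    have a32 := a23.symm; have a42 := a24.symm; have a52 := a25.symm; have a62 := a26.symm
    have a43 := a34.symm; have a53 := a35.symm; have a63 := a36.symm
    have a54 := a45.symm; have a64 := a46.symm; have a65 := a56.symm
    rcases hu with rfl|rfl|rfl|rfl|rfl|rfl <;> rcases hv with rfl|rfl|rfl|rfl|rfl|rfl <;>
      first
      | exact absurd rfl huv
      | assumption
  have huniv : (Finset.univ : Finset V) = S :=
    Finset.eq_univ_iff_forall.2 hS |>.symm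
  have hcard6 : Fintype.card V = 6 := by
    rw [← Finset.card_univ, huniv, hSdef]
    simp [Finset.card_insert_of_notMem, n12, n13, n14, n15, n16, n23, n24, n25, n26,
      n34, n35, n36, n45, n46, n56]
  let e : V ≃ Fin 6 := Fintype.equivFinOfCardEq hcard6
  refine ⟨⟨e, ?_⟩⟩
  intro u v
  simp only [SimpleGraph.top_adj, ne_eq, EmbeddingLike.apply_eq_iff_eq]
  exact ⟨fun h => hadj u v h, fun h => h.ne⟩
end

section
/- Let S be the skew-adjacency matrix of an oriented graph G^σ on n vertices with SᵀS = k·Iₙ. Then n·k is even and every eigenvalue of S is ±i√k; in particular the skew energy of G^σ equals n√k. -/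
open Matrix BigOperators

theorem eigenvalues_of_optimum {n k : ℕ} (hk : 0 < k)
    (G : SimpleGraph (Fin n)) (S : Matrix (Fin n) (Fin n) ℝ)
    (hS : IsSkewAdj G S) (h : Sᵀ * S = (k : ℝ) • 1) :
    Even (n * k) ∧
    (∀ z ∈ (S.map (Complex.ofReal)).charpoly.roots,
        z = Complex.I * (Real.sqrt k : ℂ) ∨ z = -(Complex.I * (Real.sqrt k : ℂ))) ∧
    skewEnergy S = n * Real.sqrt k := by
  obtain ⟨hskew, -⟩ := hS
  have hk0 : (0:ℝ) ≤ (k:ℝ) := Nat.cast_nonneg k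
  have hkne : (k:ℝ) ≠ 0 := Nat.cast_ne_zero.mpr hk.ne'
  -- S * S = -(k • 1)
  have hSS : S * S = -((k:ℝ) • 1) := by
    have h' := h
    rw [hskew, neg_mul] at h'
    rw [← neg_eq_iff_eq_neg.mpr h'.symm]
  -- determinant is nonzero
  have hdet2 : S.det * S.det = (k:ℝ) ^ n := by
    have := congrArg Matrix.det h
    rwa [det_mul, det_transpose, det_smul, det_one, Fintype.card_fin, mul_one] at this
  have hdetne : S.det ≠ 0 := by
    intro h0
    rw [h0, zero_mul] at hdet2
    exact (pow_ne_zero n hkne) hdet2.symm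
  refine ⟨?_, ?_, ?_⟩
  · -- n is even
    rcases Nat.even_or_odd n with he | ho
    · exact he.mul_right k
    · exfalso
      have : S.det = -S.det := by
        conv_lhs => rw [← det_transpose, hskew]
        rw [det_neg, Fintype.card_fin, ho.neg_one_pow, neg_one_mul]
      exact hdetne (by linarith)
  · -- eigenvalues
    intro z hz
    set M := S.map Complex.ofReal with hM
    have hMM : M * M = -((k:ℂ) • 1) := by
      have h2 := congrArg (fun A : Matrix (Fin n) (Fin n) ℝ =>
        A.map (Complex.ofRealHom : ℝ →+* ℂ)) hSS
      simp only [Matrix.map_mul] at h2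
      rw [hM]
      have h3 : S.map (Complex.ofRealHom : ℝ →+* ℂ) = S.map Complex.ofReal := rfl
      rw [h3] at h2
      rw [h2]
      ext i j
      by_cases hij : i = j <;>
        simp [Matrix.map_apply, Matrix.smul_apply, Matrix.one_apply, hij]
    have hroot : (M.charpoly).IsRoot z := (Polynomial.mem_roots'.mp hz).2
    have hdet0 : (Matrix.scalar (Fin n) z - M).det = 0 := by
      have he : (M.charpoly).eval z = (Matrix.scalar (Fin n) z - M).det := by
        rw [Matrix.charpoly, _root_.eval_det, matPolyEquiv_charmatrix]
        simp
      rw [← he]; exact hroot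
    obtain ⟨v, hv0, hv⟩ := (Matrix.exists_mulVec_eq_zero_iff).mpr hdet0
    have hMv : M *ᵥ v = z • v := by
      have h4 : (Matrix.scalar (Fin n) z - M) *ᵥ v = Matrix.scalar (Fin n) z *ᵥ v - M *ᵥ v :=
        Matrix.sub_mulVec _ _ _
      rw [hv] at h4
      have h5 : Matrix.scalar (Fin n) z *ᵥ v = z • v := by
        simp [Matrix.scalar_apply, Matrix.smul_mulVec, Matrix.one_mulVec]
      rw [h5] at h4
      exact (sub_eq_zero.mp h4.symm).symm
    -- z^2 = -k
    have hz2 : z * z = -(k:ℂ) := by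
      have h6 : (M * M) *ᵥ v = (z * z) • v := by
        rw [← Matrix.mulVec_mulVec, hMv, Matrix.mulVec_smul, hMv, smul_smul]
      rw [hMM] at h6
      have h7 : (-((k:ℂ) • (1 : Matrix (Fin n) (Fin n) ℂ))) *ᵥ v = (-(k:ℂ)) • v := by
        rw [Matrix.neg_mulVec, Matrix.smul_mulVec, Matrix.one_mulVec, neg_smul]
      rw [h7] at h6
      obtain ⟨i, hi⟩ := Function.ne_iff.mp hv0
      have := congrFun h6 i
      simp only [Pi.smul_apply, smul_eq_mul] at this
      exact mul_right_cancel₀ hi this.symm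
    have hw2 : (Complex.I * (Real.sqrt k : ℂ)) * (Complex.I * (Real.sqrt k : ℂ)) = -(k:ℂ) := by
      have : ((Real.sqrt k : ℝ) : ℂ) * ((Real.sqrt k : ℝ) : ℂ) = (k:ℂ) := by
        rw [← Complex.ofReal_mul, Real.mul_self_sqrt hk0, Complex.ofReal_natCast]
      calc Complex.I * (Real.sqrt k : ℂ) * (Complex.I * (Real.sqrt k : ℂ))
          = (Complex.I * Complex.I) * ((Real.sqrt k : ℂ) * (Real.sqrt k : ℂ)) := by ring
        _ = -(k:ℂ) := by rw [Complex.I_mul_I, this, neg_one_mul]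
    exact mul_self_eq_mul_self_iff.mp (hz2.trans hw2.symm)
  · -- skew energy
    have hA := Matrix.isHermitian_conjTranspose_mul_self S
    have heig : ∀ i, hA.eigenvalues i = (k:ℝ) := by
      intro i
      have hv := hA.mulVec_eigenvectorBasis i
      have hcon : Sᴴ = Sᵀ := by
        ext a b
        simp [Matrix.conjTranspose_apply]
      set w := ⇑(hA.eigenvectorBasis i) with hw
      set μ := hA.eigenvalues i with hμ
      rw [hcon, h, Matrix.smul_mulVec, Matrix.one_mulVec] at hv
      by_contra hne2
      have h9 : ((k:ℝ) - μ) • w = 0 := by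
        rw [sub_smul, hv, sub_self]
      rcases smul_eq_zero.mp h9 with h8 | h8
      · exact hne2 (sub_eq_zero.mp h8).symm
      · have h10 := hA.eigenvectorBasis.orthonormal.1 i
        have hz0 : hA.eigenvectorBasis i = 0 := by
          ext j
          exact congrFun (hw ▸ h8) j
        rw [hz0] at h10
        simp at h10
    unfold skewEnergy
    calc ∑ i, Real.sqrt ((Matrix.isHermitian_conjTranspose_mul_self S).eigenvalues i)
        = ∑ _i : Fin n, Real.sqrt (k:ℝ) := by
          apply Finset.sum_congr rfl
          intro i _
          rw [heig i]
      _ = n * Real.sqrt k := by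
          rw [Finset.sum_const, Finset.card_univ, Fintype.card_fin, nsmul_eq_mul]
end
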